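/- Let V be a finite-dimensional real inner product space, W a normed space, b : V × W → ℝ bilinear with inf-sup constant β > 0 (i.e., β‖w‖_W ≤ sup_{v≠0} b(v,w)/‖v‖ for all w ∈ W), and let Z = {v : b(v,·) = 0}. Let u be an element of an ambient normed space X ⊇ V with b extended boundedly to X × W (bound M), and suppose |b(u,w)| ≤ ε‖w‖_W for all w ∈ W. Then inf_{z ∈ Z} ‖u − z‖_X ≤ (1 + Cβ⁻¹) inf_{v ∈ V} ‖u − v‖_X + β⁻¹ε, where C depends only on M and the norm comparison between X and V. -/

import Mathlib

set_option maxHeartbeats 1000000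

open Metric RealInnerProductSpace

lemma stmt_9_core {X W : Type*} [NormedAddCommGroup X] [InnerProductSpace ℝ X]
    [NormedAddCommGroup W] [NormedSpace ℝ W]
    (V : Submodule ℝ X) [FiniteDimensional ℝ V]
    (b : X →ₗ[ℝ] W →ₗ[ℝ] ℝ) (β : ℝ) (hβ : 0 < β)
    (hinfsup : ∀ w : W, β * ‖w‖ ≤ ⨆ v : {v : X // v ∈ V ∧ v ≠ 0}, b v.1 w / ‖v.1‖)
    (v : V) (c : ℝ) (hc : 0 ≤ c) (hbv : ∀ w : W, |b (v : X) w| ≤ c * ‖w‖) :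
    ∃ s : V, (∀ w : W, b (s : X) w = b (v : X) w) ∧ β * ‖s‖ ≤ c := by
  classical
  set A : V →ₗ[ℝ] W →ₗ[ℝ] ℝ := b.comp V.subtype with hA
  set K : Submodule ℝ V := LinearMap.ker A with hK
  -- Riesz representatives
  have hT : ∀ w : W, ∃ x : V, ∀ t : V, ⟪x, t⟫ = b (t : X) w := by
    intro w
    refine ⟨(InnerProductSpace.toDual ℝ V).symm ((A.flip w).toContinuousLinearMap), ?_⟩
    intro t
    rw [InnerProductSpace.toDual_symm_apply]
    simp [A]
  let R : Submodule ℝ V :=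
    { carrier := {x : V | ∃ w : W, ∀ t : V, ⟪x, t⟫ = b (t : X) w}
      add_mem' := by
        rintro x y ⟨w1, h1⟩ ⟨w2, h2⟩
        exact ⟨w1 + w2, fun t => by simp [inner_add_left, h1 t, h2 t]⟩
      zero_mem' := ⟨0, fun t => by simp⟩
      smul_mem' := by
        rintro a x ⟨w, h⟩
        refine ⟨a • w, fun t => ?_⟩
        rw [real_inner_smul_left, h t, map_smul, smul_eq_mul] }
  have hRK : Rᗮ = K := by
    ext t
    rw [Submodule.mem_orthogonal]
    constructor
    · intro ht
      rw [hK, LinearMap.mem_ker]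
      ext w
      obtain ⟨x, hx⟩ := hT w
      have h0 := ht x ⟨w, hx⟩
      have := hx t
      simp only [A, LinearMap.comp_apply, Submodule.subtype_apply, LinearMap.zero_apply]
      rw [← this, h0]
    · intro ht x hx
      obtain ⟨w, hw⟩ := hx
      have : A t = 0 := ht
      rw [hw t]
      exact (LinearMap.congr_fun this w).symm ▸ rfl
  have hKR : Kᗮ = R := by rw [← hRK, Submodule.orthogonal_orthogonal]
  set s : V := v - (K.orthogonalProjectionOnto v : V) with hs
  have hsK : s ∈ Kᗮ := Submodule.sub_starProjection_mem_orthogonal (K := K) v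
  have hpK : ((K.orthogonalProjectionOnto v : V)) ∈ K := SetLike.coe_mem _
  have hAs : ∀ w : W, b (s : X) w = b (v : X) w := by
    intro w
    have hp0 : A ((K.orthogonalProjectionOnto v : V)) = 0 := hpK
    have hbp : b ((K.orthogonalProjectionOnto v : V) : X) w = 0 :=
      LinearMap.congr_fun hp0 w
    have : ((s : V) : X) = (v : X) - ((K.orthogonalProjectionOnto v : V) : X) := by
      simp [hs]
    rw [this, map_sub]
    simpa using hbp
  refine ⟨s, hAs, ?_⟩
  rcases eq_or_ne s 0 with h0 | h0
  · simp [h0, hc]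
  · have hsR : s ∈ R := hKR ▸ hsK
    obtain ⟨w, hw⟩ := hsR
    have hns : (0:ℝ) < ‖s‖ := norm_pos_iff.mpr h0
    -- β‖w‖ ≤ ‖s‖
    have h1 : β * ‖w‖ ≤ ‖s‖ := by
      refine le_trans (hinfsup w) (Real.iSup_le ?_ hns.le)
      rintro ⟨v', hv'⟩
      have hv'pos : (0:ℝ) < ‖v'‖ := norm_pos_iff.mpr hv'.2
      rw [div_le_iff₀ hv'pos]
      have := hw ⟨v', hv'.1⟩
      have hcs : ⟪s, (⟨v', hv'.1⟩ : V)⟫ ≤ ‖s‖ * ‖(⟨v', hv'.1⟩ : V)‖ := real_inner_le_norm _ _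
      rw [this] at hcs
      simpa using hcs
    have h2 : ‖s‖ * ‖s‖ = b (s : X) w := by
      have := hw s
      rw [← this, real_inner_self_eq_norm_mul_norm]
    have h3 : ‖s‖ * ‖s‖ ≤ c * ‖w‖ := by
      rw [h2, hAs w]
      exact le_trans (le_abs_self _) (hbv w)
    nlinarith [h1, h3, hns, hc, hβ]

/-- approximation property of the discrete kernel (abstract Theorem 5.4). -/
theorem stmt_9 {X W : Type*} [NormedAddCommGroup X] [InnerProductSpace ℝ X]
    [NormedAddCommGroup W] [NormedSpace ℝ W]
    (V : Submodule ℝ X) [FiniteDimensional ℝ V]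
    (b : X →ₗ[ℝ] W →ₗ[ℝ] ℝ) (β M ε : ℝ) (hβ : 0 < β) (hM : 0 < M) (hε : 0 ≤ ε)
    (hbound : ∀ (x : X) (w : W), |b x w| ≤ M * ‖x‖ * ‖w‖)
    (hinfsup : ∀ w : W, β * ‖w‖ ≤ ⨆ v : {v : X // v ∈ V ∧ v ≠ 0}, b v.1 w / ‖v.1‖)
    (u : X) (hcons : ∀ w : W, |b u w| ≤ ε * ‖w‖) :
    ∃ C > (0 : ℝ),
      Metric.infDist u {v : X | v ∈ V ∧ ∀ w : W, b v w = 0}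
        ≤ (1 + C * β⁻¹) * Metric.infDist u (V : Set X) + β⁻¹ * ε := by
  refine ⟨M, hM, ?_⟩
  set Z : Set X := {v : X | v ∈ V ∧ ∀ w : W, b v w = 0} with hZ
  have key : ∀ x ∈ (V : Set X),
      Metric.infDist u Z ≤ (1 + M * β⁻¹) * dist u x + β⁻¹ * ε := by
    intro x hx
    have hbx : ∀ w : W, |b x w| ≤ (M * ‖u - x‖ + ε) * ‖w‖ := by
      intro w
      have h1 : b x w = b (x - u) w + b u w := by rw [map_sub]; simp
      calc |b x w| ≤ |b (x - u) w| + |b u w| := by rw [h1]; exact abs_add_le _ _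
        _ ≤ M * ‖x - u‖ * ‖w‖ + ε * ‖w‖ := add_le_add (hbound _ _) (hcons _)
        _ = (M * ‖u - x‖ + ε) * ‖w‖ := by rw [norm_sub_rev]; ring
    obtain ⟨s, hs1, hs2⟩ := stmt_9_core V b β hβ hinfsup ⟨x, hx⟩
      (M * ‖u - x‖ + ε) (by positivity) hbx
    have hmem : ((⟨x, hx⟩ - s : V) : X) ∈ Z := by
      refine ⟨SetLike.coe_mem _, fun w => ?_⟩
      have : ((⟨x, hx⟩ - s : V) : X) = x - (s : X) := rfl
      rw [this, map_sub]
      simp [hs1 w]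
    have hsn : ‖(s : X)‖ ≤ β⁻¹ * (M * ‖u - x‖ + ε) := by
      rw [← Submodule.norm_coe] at hs2
      rw [← le_div_iff₀' hβ] at hs2
      rw [div_eq_inv_mul] at hs2
      exact hs2
    calc Metric.infDist u Z ≤ dist u ((⟨x, hx⟩ - s : V) : X) :=
          Metric.infDist_le_dist_of_mem hmem
      _ = ‖u - (x - (s : X))‖ := by rw [dist_eq_norm]; rfl
      _ ≤ ‖u - x‖ + ‖(s : X)‖ := by
          have : u - (x - (s : X)) = (u - x) + (s : X) := by abel
          rw [this]; exact norm_add_le _ _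
      _ ≤ ‖u - x‖ + β⁻¹ * (M * ‖u - x‖ + ε) := by linarith
      _ = (1 + M * β⁻¹) * ‖u - x‖ + β⁻¹ * ε := by ring
      _ = (1 + M * β⁻¹) * dist u x + β⁻¹ * ε := by rw [dist_eq_norm]
  have ha : (0:ℝ) < 1 + M * β⁻¹ := by positivity
  have hVne : (V : Set X).Nonempty := ⟨0, V.zero_mem⟩
  by_contra hcon
  push_neg at hcon
  have hlt : Metric.infDist u (V : Set X) < (Metric.infDist u Z - β⁻¹ * ε) / (1 + M * β⁻¹) := by
    rw [lt_div_iff₀ ha]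
    nlinarith [hcon]
  obtain ⟨y, hy, hd⟩ := (Metric.infDist_lt_iff hVne).1 hlt
  rw [lt_div_iff₀ ha] at hd
  have hk := key y hy
  nlinarith [hk, hd]
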